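/- A prime play u of a Zielonka automaton is a Q-broadcast (for Q ⊆ P) if and only if for every trace v such that uv is a play and v is prime, at least one of the following holds: uv is prime, or v I Q, or dom(v) ⊆ Q. -/

import Mathlib

namespace MazTrace

variable {A : Type*}

/-- Smallest equivalence on words over `A` generated by commuting two adjacent
independent letters (`a I b` iff `¬ D a b`). -/
inductive TraceRel (D : A → A → Prop) : List A → List A → Prop
  | refl (u : List A) : TraceRel D u u
  | swap (u v : List A) (a b : A) (h : ¬ D a b) :
      TraceRel D (u ++ a :: b :: v) (u ++ b :: a :: v)
  | symm {u v : List A} : TraceRel D u v → TraceRel D v u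
  | trans {u v w : List A} : TraceRel D u v → TraceRel D v w → TraceRel D u w

theorem TraceRel.append_right {D : A → A → Prop} {u u' : List A} (w : List A)
    (h : TraceRel D u u') : TraceRel D (u ++ w) (u' ++ w) := by
  induction h with
  | refl u => exact .refl _
  | swap x y a b hab =>
      simpa [List.append_assoc] using TraceRel.swap (D := D) x (y ++ w) a b hab
  | symm _ ih => exact ih.symm
  | trans _ _ ih1 ih2 => exact ih1.trans ih2

theorem TraceRel.append_left {D : A → A → Prop} {v v' : List A} (w : List A)
    (h : TraceRel D v v') : TraceRel D (w ++ v) (w ++ v') := by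
  induction h with
  | refl u => exact .refl _
  | swap x y a b hab =>
      simpa [List.append_assoc] using TraceRel.swap (D := D) (w ++ x) y a b hab
  | symm _ ih => exact ih.symm
  | trans _ _ ih1 ih2 => exact ih1.trans ih2

def traceSetoid (D : A → A → Prop) : Setoid (List A) :=
  ⟨TraceRel D, ⟨TraceRel.refl, TraceRel.symm, TraceRel.trans⟩⟩

/-- A Mazurkiewicz trace: an equivalence class of words. -/
def Trace (D : A → A → Prop) : Type _ := Quotient (traceSetoid D)

namespace Trace

variable {D : A → A → Prop}

/-- The trace of a word. -/
def mk (D : A → A → Prop) (u : List A) : Trace D := Quotient.mk (traceSetoid D) u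

/-- The empty trace. -/
instance : One (Trace D) := ⟨mk D []⟩

/-- Concatenation of traces, induced by concatenation of words. -/
instance : Mul (Trace D) :=
  ⟨fun s t => Quotient.liftOn₂ s t (fun u v => mk D (u ++ v))
    (fun _ _ _ _ hu hv =>
      Quotient.sound ((hu.append_right _).trans (TraceRel.append_left _ hv)))⟩

instance : Nonempty (Trace D) := ⟨1⟩

/-- Length of a trace: the length of any of its linearizations. -/
def length (t : Trace D) : ℕ :=
  Quotient.liftOn t List.length (by
    intro u v h
    induction h with
    | refl u => rfl
    | swap x y a b hab => simp
    | symm _ ih => exact ih.symm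
    | trans _ _ ih1 ih2 => exact ih1.trans ih2)

/-- The set of letters of a trace. -/
def alph (t : Trace D) : Set A :=
  Quotient.liftOn t (fun u => {a | a ∈ u}) (by
    intro u v h
    induction h with
    | refl u => rfl
    | swap x y a b hab => ext c; simp [List.mem_append]; tauto
    | symm _ ih => exact ih.symm
    | trans _ _ ih1 ih2 => exact ih1.trans ih2)

/-- Prefix order on traces: `s ⊑ t` iff `s * w = t` for some trace `w`. -/
def Prefix (s t : Trace D) : Prop := ∃ w, s * w = t

/-- `t I B` : every letter of the trace `t` is independent of every element of `B`. -/
def IndepSet (t : Trace D) (B : Set A) : Prop := ∀ a ∈ t.alph, ∀ b ∈ B, ¬ D a b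

/-- `w` is the `B`-view of `t`: the shortest prefix of `t` such that `t = w·v`
for some trace `v` with `v I B`. -/
def IsView (B : Set A) (t w : Trace D) : Prop :=
  (∃ v, w * v = t ∧ v.IndepSet B) ∧
  ∀ w' v', w' * v' = t → v'.IndepSet B → w.length ≤ w'.length

/-- The `B`-view of a trace. -/
noncomputable def view (B : Set A) (t : Trace D) : Trace D :=
  Classical.epsilon (IsView B t)

/-- A trace is prime if all its linearizations have the same last letter. -/
def IsPrime (t : Trace D) : Prop :=
  ∃ a : A, ∀ u : List A, mk D u = t → u.getLast? = some a

/-- A trace is `b`-prime if every linearization of it ends with the letter `b`. -/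
def LastIs (b : A) (t : Trace D) : Prop :=
  ∀ u : List A, mk D u = t → u.getLast? = some b

end Trace

/-- A Zielonka automaton over the actions `A` and the processes `P`:
each process `p` has a finite state set `St p` with an initial state, final states
and a set `acts p` of actions (`A` is covered by the `acts p`); transitions form a
deterministic set of tuples `(a, (q_p)_{p ∈ dom a}, (q'_p)_{p ∈ dom a})`,
modelled as a partial function `δ`. -/
structure ZAut (A : Type*) (P : Type*) where
  St : P → Type*
  stFinite : ∀ p, Finite (St p)
  init : ∀ p, St p
  final : ∀ p, Set (St p)
  acts : P → Set A
  covers : ∀ a : A, ∃ p, a ∈ acts p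
  δ : ∀ a : A, (∀ p : {p : P // a ∈ acts p}, St p.1) →
      Option (∀ p : {p : P // a ∈ acts p}, St p.1)

namespace ZAut

open scoped Classical

variable {A P : Type*} (M : ZAut A P)

/-- The domain of an action: the processes taking part in it. -/
def dom (a : A) : Set P := {p | a ∈ M.acts p}

/-- Two actions are dependent iff their domains intersect. -/
def Dep (a b : A) : Prop := ∃ p : P, p ∈ M.dom a ∧ p ∈ M.dom b

/-- The domain of a trace: the union of the domains of its letters. -/
def tdom (t : Trace M.Dep) : Set P := {p | ∃ a ∈ t.alph, p ∈ M.dom a}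

/-- One step of the automaton on a global state. -/
noncomputable def step (q : ∀ p, M.St p) (a : A) : Option (∀ p, M.St p) :=
  (M.δ a (fun p => q p.1)).map
    (fun q' p => if h : a ∈ M.acts p then q' ⟨p, h⟩ else q p)

/-- The run of the automaton on a word, from the initial global state. -/
noncomputable def runWord (u : List A) : Option (∀ p, M.St p) :=
  u.foldl (fun oq a => oq.bind (fun q => M.step q a)) (some fun p => M.init p)

/-- The global state `Q(t)` reached after a trace `t` (all linearizations give
the same run). -/
noncomputable def run (t : Trace M.Dep) : Option (∀ p, M.St p) :=
  Classical.epsilon (fun o => ∀ u : List A, Trace.mk M.Dep u = t → M.runWord u = o)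

/-- A trace is a play if the automaton can execute it from the initial state. -/
def IsPlay (t : Trace M.Dep) : Prop :=
  ∀ u : List A, Trace.mk M.Dep u = t → (M.runWord u).isSome = true

/-- `a` is a maximal action of `t` : `t = t'·a` for some trace `t'`. -/
def MaxAct (t : Trace M.Dep) (a : A) : Prop :=
  ∃ t', t = t' * Trace.mk M.Dep [a]

/-- `v I Q` : the domain of every letter of `v` is disjoint from `Q`. -/
def IndepProcs (v : Trace M.Dep) (Q : Set P) : Prop :=
  ∀ b ∈ v.alph, M.dom b ∩ Q = ∅

/-- A `Q`-broadcast: a prime play `u` such that for every play `uv` and every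
action `a` maximal in `uv` whose domain meets both `Q` and `P ∖ Q`,
`u ⊑ view_a(uv)`. -/
def Broadcast (Q : Set P) (u : Trace M.Dep) : Prop :=
  u.IsPrime ∧ M.IsPlay u ∧
  ∀ (v : Trace M.Dep) (a : A), M.IsPlay (u * v) → M.MaxAct (u * v) a →
    (M.dom a ∩ Q).Nonempty → (M.dom a ∩ Qᶜ).Nonempty →
    u.Prefix (Trace.view {a} (u * v))

end ZAut

end MazTrace
namespace MazTrace
namespace Trace

attribute [local instance] Classical.propDecidable

variable {A : Type*} {D : A → A → Prop}

theorem mk_append (u v : List A) : mk D (u ++ v) = mk D u * mk D v := rfl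

theorem one_def : (1 : Trace D) = mk D [] := rfl

theorem exists_rep (t : Trace D) : ∃ l, mk D l = t := Quotient.exists_rep t

theorem sound {u v : List A} (h : TraceRel D u v) : mk D u = mk D v := Quotient.sound h

theorem exact {u v : List A} (h : mk D u = mk D v) : TraceRel D u v := Quotient.exact h

theorem mul_assoc' (s t r : Trace D) : s * t * r = s * (t * r) := by
  obtain ⟨ls, rfl⟩ := exists_rep s
  obtain ⟨lt, rfl⟩ := exists_rep t
  obtain ⟨lr, rfl⟩ := exists_rep r
  show mk D ((ls ++ lt) ++ lr) = mk D (ls ++ (lt ++ lr))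
  rw [List.append_assoc]

theorem one_mul' (t : Trace D) : 1 * t = t := by
  obtain ⟨l, rfl⟩ := exists_rep t; rfl

theorem mul_one' (t : Trace D) : t * 1 = t := by
  obtain ⟨l, rfl⟩ := exists_rep t
  show mk D (l ++ []) = mk D l
  rw [List.append_nil]

theorem length_mk (l : List A) : (mk D l).length = l.length := rfl

theorem length_mul (s t : Trace D) : (s * t).length = s.length + t.length := by
  obtain ⟨ls, rfl⟩ := exists_rep s
  obtain ⟨lt, rfl⟩ := exists_rep t
  show (ls ++ lt).length = ls.length + lt.length
  rw [List.length_append]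

theorem eq_one_of_length {t : Trace D} (h : t.length = 0) : t = 1 := by
  obtain ⟨l, rfl⟩ := exists_rep t
  have : l = [] := List.length_eq_zero_iff.mp h
  rw [this]; rfl

theorem mem_alph_mk {a : A} {l : List A} : a ∈ (mk D l).alph ↔ a ∈ l := Iff.rfl

theorem alph_mul (s t : Trace D) : (s * t).alph = s.alph ∪ t.alph := by
  obtain ⟨ls, rfl⟩ := exists_rep s
  obtain ⟨lt, rfl⟩ := exists_rep t
  ext c
  show c ∈ ls ++ lt ↔ _
  simp [List.mem_append, Set.mem_union, mem_alph_mk]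

theorem alph_one : (1 : Trace D).alph = ∅ := by
  ext c; show c ∈ ([] : List A) ↔ _; simp

theorem exists_last {t : Trace D} (h : t ≠ 1) : ∃ s e, t = s * mk D [e] := by
  obtain ⟨l, rfl⟩ := exists_rep t
  have hl : l ≠ [] := by rintro rfl; exact h rfl
  refine ⟨mk D l.dropLast, l.getLast hl, ?_⟩
  conv_lhs => rw [← List.dropLast_append_getLast hl]
  rfl

theorem exists_head {t : Trace D} (h : t ≠ 1) : ∃ e s, t = mk D [e] * s := by
  obtain ⟨l, rfl⟩ := exists_rep t
  have hl : l ≠ [] := by rintro rfl; exact h rfl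
  obtain ⟨e, l', rfl⟩ := List.exists_cons_of_ne_nil hl
  exact ⟨e, mk D l', rfl⟩

/-- Projection of a word onto the letters `{a, b}`. -/
noncomputable def proj (a b : A) (l : List A) : List A :=
  l.filter (fun x => decide (x = a ∨ x = b))

theorem proj_append (a b : A) (l m : List A) :
    proj a b (l ++ m) = proj a b l ++ proj a b m := List.filter_append _ _

theorem proj_cons (a b x : A) (l : List A) :
    proj a b (x :: l) = if x = a ∨ x = b then x :: proj a b l else proj a b l := by
  by_cases h : x = a ∨ x = b <;> simp [proj, List.filter_cons, h]

theorem proj_eq_of_rel (hrefl : ∀ a, D a a) (hsymm : ∀ {a b}, D a b → D b a)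
    {u v : List A} (h : TraceRel D u v) (a b : A) (hab : D a b) :
    proj a b u = proj a b v := by
  induction h with
  | refl u => rfl
  | symm _ ih => exact ih.symm
  | trans _ _ ih1 ih2 => exact ih1.trans ih2
  | swap x y c d hcd =>
    rw [proj_append, proj_append, proj_cons, proj_cons, proj_cons, proj_cons]
    have : ¬ ((c = a ∨ c = b) ∧ (d = a ∨ d = b)) := by
      rintro ⟨hc, hd⟩
      apply hcd
      rcases hc with rfl|rfl <;> rcases hd with rfl|rfl
      · exact hrefl _
      · exact hab
      · exact hsymm hab
      · exact hrefl _
    by_cases hc : c = a ∨ c = b <;> by_cases hd : d = a ∨ d = b <;>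
      simp [hc, hd] at this ⊢

theorem proj_eq_of_mk (hrefl : ∀ a, D a a) (hsymm : ∀ {a b}, D a b → D b a)
    {u v : List A} (h : mk D u = mk D v) {a b : A} (hab : D a b) :
    proj a b u = proj a b v :=
  proj_eq_of_rel hrefl hsymm (exact h) a b hab

end Trace
end MazTrace
namespace MazTrace
namespace Trace

attribute [local instance] Classical.propDecidable

variable {A : Type*} {D : A → A → Prop}

theorem cons_min (hrefl : ∀ a, D a a) (hsymm : ∀ {a b}, D a b → D b a)
    {x : A} : ∀ {v : List A},
    (∀ b, D x b → ∃ l₂, proj x b v = x :: l₂) →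
    ∃ v', mk D v = mk D (x :: v') := by
  intro v
  induction v with
  | nil =>
    intro h
    obtain ⟨l₂, hl⟩ := h x (hrefl x)
    simp [proj] at hl
  | cons y v₃ ih =>
    intro h
    by_cases hyx : y = x
    · subst hyx; exact ⟨v₃, rfl⟩
    · have hDxy : ¬ D x y := by
        intro hD
        obtain ⟨l₂, hl⟩ := h y hD
        rw [proj_cons, if_pos (Or.inr rfl)] at hl
        injection hl with h1 _
        exact hyx h1
      have h' : ∀ b, D x b → ∃ l₂, proj x b v₃ = x :: l₂ := by
        intro b hb
        obtain ⟨l₂, hl⟩ := h b hb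
        rw [proj_cons] at hl
        have hny : ¬ (y = x ∨ y = b) := by
          rintro (rfl|rfl)
          · exact hyx rfl
          · exact hDxy hb
        rw [if_neg hny] at hl
        exact ⟨l₂, hl⟩
      obtain ⟨v₄, hv₄⟩ := ih h'
      refine ⟨y :: v₄, ?_⟩
      calc mk D (y :: v₃) = mk D [y] * mk D v₃ := rfl
        _ = mk D [y] * mk D (x :: v₄) := by rw [hv₄]
        _ = mk D (y :: x :: v₄) := rfl
        _ = mk D (x :: y :: v₄) :=
            sound (TraceRel.swap [] v₄ y x (fun hD => hDxy (hsymm hD)))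

theorem eq_of_proj (hrefl : ∀ a, D a a) (hsymm : ∀ {a b}, D a b → D b a) :
    ∀ {u v : List A},
    (∀ a b, D a b → proj a b u = proj a b v) → mk D u = mk D v := by
  intro u
  induction u with
  | nil =>
    intro v h
    cases v with
    | nil => rfl
    | cons y v' =>
      have := (h y y (hrefl y)).symm
      rw [proj_cons, if_pos (Or.inl rfl)] at this
      simp [proj] at this
  | cons x u₁ ih =>
    intro v h
    have hx : ∀ b, D x b → ∃ l₂, proj x b v = x :: l₂ := by
      intro b hb
      have h2 := (h x b hb).symm
      rw [proj_cons, if_pos (Or.inl rfl)] at h2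
      exact ⟨_, h2⟩
    obtain ⟨v', hv'⟩ := cons_min hrefl hsymm hx
    have hstrip : ∀ a b, D a b → proj a b u₁ = proj a b v' := by
      intro a b hab
      have h2 : proj a b (x :: u₁) = proj a b (x :: v') := by
        rw [h a b hab, proj_eq_of_mk hrefl hsymm hv' hab]
      rw [proj_cons, proj_cons] at h2
      by_cases hxab : x = a ∨ x = b
      · rw [if_pos hxab, if_pos hxab] at h2
        injection h2
      · rwa [if_neg hxab, if_neg hxab] at h2
    have hu₁ := ih hstrip
    calc mk D (x :: u₁) = mk D [x] * mk D u₁ := rfl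
      _ = mk D [x] * mk D v' := by rw [hu₁]
      _ = mk D (x :: v') := rfl
      _ = mk D v := hv'.symm

theorem mul_left_cancel' (hrefl : ∀ a, D a a) (hsymm : ∀ {a b}, D a b → D b a)
    {s t t' : Trace D} (h : s * t = s * t') : t = t' := by
  obtain ⟨ls, rfl⟩ := exists_rep s
  obtain ⟨lt, rfl⟩ := exists_rep t
  obtain ⟨lt', rfl⟩ := exists_rep t'
  apply eq_of_proj hrefl hsymm
  intro a b hab
  have h2 := proj_eq_of_mk hrefl hsymm (h : mk D (ls ++ lt) = mk D (ls ++ lt')) hab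
  rw [proj_append, proj_append] at h2
  exact List.append_cancel_left h2

theorem mul_right_cancel' (hrefl : ∀ a, D a a) (hsymm : ∀ {a b}, D a b → D b a)
    {s t t' : Trace D} (h : t * s = t' * s) : t = t' := by
  obtain ⟨ls, rfl⟩ := exists_rep s
  obtain ⟨lt, rfl⟩ := exists_rep t
  obtain ⟨lt', rfl⟩ := exists_rep t'
  apply eq_of_proj hrefl hsymm
  intro a b hab
  have h2 := proj_eq_of_mk hrefl hsymm (h : mk D (lt ++ ls) = mk D (lt' ++ ls)) hab
  rw [proj_append, proj_append] at h2
  exact List.append_cancel_right h2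

theorem prefix_refl (t : Trace D) : t.Prefix t := ⟨1, mul_one' t⟩

theorem prefix_trans {s t r : Trace D} (h1 : s.Prefix t) (h2 : t.Prefix r) :
    s.Prefix r := by
  obtain ⟨w1, rfl⟩ := h1
  obtain ⟨w2, rfl⟩ := h2
  exact ⟨w1 * w2, (mul_assoc' s w1 w2).symm⟩

theorem prefix_mul_right (s t : Trace D) : s.Prefix (s * t) := ⟨t, rfl⟩

theorem prefix_length_le {s t : Trace D} (h : s.Prefix t) : s.length ≤ t.length := by
  obtain ⟨w, rfl⟩ := h
  rw [length_mul]
  exact Nat.le_add_right _ _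

theorem prefix_antisymm_of_length {s t : Trace D} (h : s.Prefix t)
    (hl : t.length ≤ s.length) : s = t := by
  obtain ⟨w, rfl⟩ := h
  rw [length_mul] at hl
  have : w.length = 0 := by omega
  rw [eq_one_of_length this, mul_one']

theorem prefix_cancel_left (hrefl : ∀ a, D a a) (hsymm : ∀ {a b}, D a b → D b a)
    {u x y : Trace D} (h : (u * x).Prefix (u * y)) : x.Prefix y := by
  obtain ⟨k, hk⟩ := h
  rw [mul_assoc'] at hk
  exact ⟨k, mul_left_cancel' hrefl hsymm hk⟩

theorem prefix_mul_left (u : Trace D) {x y : Trace D} (h : x.Prefix y) :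
    (u * x).Prefix (u * y) := by
  obtain ⟨k, rfl⟩ := h
  exact ⟨k, mul_assoc' u x k⟩

theorem alph_prefix {s t : Trace D} (h : s.Prefix t) : s.alph ⊆ t.alph := by
  obtain ⟨w, rfl⟩ := h
  rw [alph_mul]
  exact Set.subset_union_left

theorem alph_suffix {s t w : Trace D} (h : t * w = s) : w.alph ⊆ s.alph := by
  subst h
  rw [alph_mul]
  exact Set.subset_union_right

theorem comm_word (hsymm : ∀ {a b}, D a b → D b a) :
    ∀ (l : List A) (x : A), (∀ c ∈ l, ¬ D c x) → mk D (l ++ [x]) = mk D (x :: l) := by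
  intro l
  induction l with
  | nil => intro x _; rfl
  | cons y l ih =>
    intro x h
    have hy : ¬ D y x := h y (List.mem_cons_self (a := y) (l := l))
    have hl := ih x (fun c hc => h c (List.mem_cons_of_mem y hc))
    calc mk D ((y :: l) ++ [x]) = mk D [y] * mk D (l ++ [x]) := rfl
      _ = mk D [y] * mk D (x :: l) := by rw [hl]
      _ = mk D (y :: x :: l) := rfl
      _ = mk D (x :: y :: l) := sound (TraceRel.swap [] l y x hy)

theorem comm_single (hsymm : ∀ {a b}, D a b → D b a) {w : Trace D} {x : A}
    (h : ∀ c ∈ w.alph, ¬ D c x) : w * mk D [x] = mk D [x] * w := by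
  obtain ⟨l, rfl⟩ := exists_rep w
  exact comm_word hsymm l x (fun c hc => h c hc)

theorem comm_mul (hsymm : ∀ {a b}, D a b → D b a) {w m : Trace D}
    (h : ∀ c ∈ w.alph, ∀ x ∈ m.alph, ¬ D c x) : w * m = m * w := by
  obtain ⟨lm, rfl⟩ := exists_rep m
  induction lm with
  | nil => rw [show mk D [] = (1 : Trace D) from rfl, mul_one', one_mul']
  | cons x lm ih =>
    have hx : ∀ c ∈ w.alph, ¬ D c x := fun c hc => h c hc x (List.mem_cons_self (a := x) (l := lm))
    have h' : ∀ c ∈ w.alph, ∀ y ∈ (mk D lm).alph, ¬ D c y :=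
      fun c hc y hy => h c hc y (List.mem_cons_of_mem x hy)
    calc w * mk D (x :: lm) = w * (mk D [x] * mk D lm) := rfl
      _ = (w * mk D [x]) * mk D lm := (mul_assoc' _ _ _).symm
      _ = (mk D [x] * w) * mk D lm := by rw [comm_single hsymm hx]
      _ = mk D [x] * (w * mk D lm) := mul_assoc' _ _ _
      _ = mk D [x] * (mk D lm * w) := by rw [ih h']
      _ = (mk D [x] * mk D lm) * w := (mul_assoc' _ _ _).symm
      _ = mk D (x :: lm) * w := rfl

end Trace
end MazTrace
namespace MazTrace
namespace Trace

attribute [local instance] Classical.propDecidable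

variable {A : Type*} {D : A → A → Prop}

theorem lastIs_ne_one {b : A} {t : Trace D} (h : LastIs b t) : t ≠ 1 := by
  intro ht
  have := h [] (by rw [ht]; rfl)
  simp at this

theorem lastIs_ends {b e : A} {s t : Trace D} (h : LastIs b t)
    (hdec : s * mk D [e] = t) : e = b := by
  obtain ⟨ls, rfl⟩ := exists_rep s
  have h2 := h (ls ++ [e]) hdec
  rw [List.getLast?_concat] at h2
  exact (Option.some.injEq _ _ ▸ h2 : e = b)

theorem lastIs_decomp {b : A} {t : Trace D} (h : LastIs b t) :
    ∃ s, t = s * mk D [b] := by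
  obtain ⟨s, e, hse⟩ := exists_last (lastIs_ne_one h)
  obtain rfl := lastIs_ends h hse.symm
  exact ⟨s, hse⟩

theorem lastIs_of_all {b : A} {t : Trace D} (hne : t ≠ 1)
    (h : ∀ s e, t = s * mk D [e] → e = b) : LastIs b t := by
  intro l hl
  have hlne : l ≠ [] := by rintro rfl; exact hne hl.symm
  have hdec : t = mk D l.dropLast * mk D [l.getLast hlne] := by
    rw [← hl]
    conv_lhs => rw [← List.dropLast_append_getLast hlne]
    rfl
  have := h _ _ hdec
  rw [List.getLast?_eq_getLast hlne, this]

theorem lastIs_root (hrefl : ∀ a, D a a) {a : A} {t p q : Trace D}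
    (h : LastIs a t) (hdec : p * q = t) (hq : ∀ c ∈ q.alph, ¬ D c a) : q = 1 := by
  by_contra hne
  obtain ⟨q₁, e, rfl⟩ := exists_last hne
  rw [← mul_assoc'] at hdec
  obtain rfl := lastIs_ends h hdec
  refine hq e ?_ (hrefl e)
  rw [alph_mul]
  exact Set.mem_union_right _ (by simp [mem_alph_mk])

theorem indepSet_singleton {t : Trace D} {a : A} :
    t.IndepSet {a} ↔ ∀ c ∈ t.alph, ¬ D c a := by
  constructor
  · exact fun h c hc => h c hc a rfl
  · rintro h c hc b rfl
    exact h c hc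

theorem head_eq (hrefl : ∀ a, D a a) (hsymm : ∀ {a b}, D a b → D b a)
    {z x : A} {p q : Trace D}
    (h : mk D [z] * p = mk D [x] * q) (hzx : z ≠ x) :
    ¬ D z x ∧ ∃ k, p = mk D [x] * k ∧ q = mk D [z] * k := by
  obtain ⟨lp, rfl⟩ := exists_rep p
  obtain ⟨lq, rfl⟩ := exists_rep q
  have h' : mk D (z :: lp) = mk D (x :: lq) := h
  have hDzx : ¬ D z x := by
    intro hD
    have h2 := proj_eq_of_mk hrefl hsymm h' hD
    rw [proj_cons, if_pos (Or.inl rfl), proj_cons, if_pos (Or.inr rfl)] at h2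
    injection h2 with h3 _
    exact hzx h3
  refine ⟨hDzx, ?_⟩
  have hxin : x ∈ lp := by
    have : x ∈ (mk D (z :: lp)).alph := by
      rw [h']; exact List.mem_cons_self (a := x) (l := lq)
    rcases List.mem_cons.mp (mem_alph_mk.mp this) with h4 | h4
    · exact absurd h4 hzx.symm
    · exact h4
  have hmin : ∀ b, D x b → ∃ l₂, proj x b lp = x :: l₂ := by
    intro b hb
    have hz : ¬ (z = x ∨ z = b) := by
      rintro (rfl | rfl)
      · exact hzx rfl
      · exact hDzx (hsymm hb)
    have h2 := proj_eq_of_mk hrefl hsymm h' hb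
    rw [proj_cons, if_neg hz, proj_cons, if_pos (Or.inl rfl)] at h2
    exact ⟨_, h2⟩
  obtain ⟨k, hk⟩ := cons_min hrefl hsymm hmin
  refine ⟨mk D k, hk, ?_⟩
  have h5 : mk D (z :: x :: k) = mk D (x :: lq) := by
    calc mk D (z :: x :: k) = mk D [z] * mk D (x :: k) := rfl
      _ = mk D [z] * mk D lp := by rw [hk]
      _ = mk D (x :: lq) := h'
  have h6 : mk D (x :: z :: k) = mk D (x :: lq) := by
    rw [← h5]
    exact (sound (TraceRel.swap [] k z x hDzx)).symm
  have h7 := mul_left_cancel' hrefl hsymm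
    (show mk D [x] * mk D (z :: k) = mk D [x] * mk D lq from h6)
  rw [← h7]
  rfl

theorem head_split (hrefl : ∀ a, D a a) (hsymm : ∀ {a b}, D a b → D b a)
    {x : A} {q r : Trace D} : ∀ {lp : List A},
    mk D lp * q = mk D [x] * r →
    (∃ p', mk D lp = mk D [x] * p') ∨
      (∃ q', q = mk D [x] * q' ∧ ∀ c ∈ (mk D lp).alph, ¬ D c x) := by
  intro lp
  induction lp generalizing q r with
  | nil =>
    intro h
    rw [show mk D ([] : List A) = (1 : Trace D) from rfl, one_mul'] at h
    exact Or.inr ⟨r, h, fun c hc => absurd (mem_alph_mk.mp hc) (List.not_mem_nil (a := c))⟩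
  | cons z lp ih =>
    intro h
    by_cases hzx : z = x
    · subst hzx; exact Or.inl ⟨mk D lp, rfl⟩
    · have h' : mk D [z] * (mk D lp * q) = mk D [x] * r := by
        rw [← mul_assoc']
        exact h
      obtain ⟨hDzx, k, hk1, hk2⟩ := head_eq hrefl hsymm h' hzx
      rcases ih hk1 with ⟨p', hp'⟩ | ⟨q', hq', hind⟩
      · left
        obtain ⟨lp', rfl⟩ := exists_rep p'
        refine ⟨mk D (z :: lp'), ?_⟩
        calc mk D (z :: lp) = mk D [z] * mk D lp := rfl
          _ = mk D [z] * (mk D [x] * mk D lp') := by rw [hp']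
          _ = mk D (z :: x :: lp') := rfl
          _ = mk D (x :: z :: lp') := sound (TraceRel.swap [] lp' z x hDzx)
          _ = mk D [x] * mk D (z :: lp') := rfl
      · right
        refine ⟨q', hq', ?_⟩
        intro c hc
        rcases List.mem_cons.mp (mem_alph_mk.mp hc) with h4 | h4
        · subst h4; exact hDzx
        · exact hind c h4

theorem head_split' (hrefl : ∀ a, D a a) (hsymm : ∀ {a b}, D a b → D b a)
    {x : A} {p q r : Trace D} (h : p * q = mk D [x] * r) :
    (∃ p', p = mk D [x] * p') ∨
      (∃ q', q = mk D [x] * q' ∧ ∀ c ∈ p.alph, ¬ D c x) := by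
  obtain ⟨lp, rfl⟩ := exists_rep p
  exact head_split hrefl hsymm h

theorem prefix_head (hrefl : ∀ a, D a a) (hsymm : ∀ {a b}, D a b → D b a)
    {w s : Trace D} {x : A} (h : w.Prefix (mk D [x] * s)) :
    (∃ w', w = mk D [x] * w' ∧ w'.Prefix s) ∨
      ((∀ c ∈ w.alph, ¬ D c x) ∧ w.Prefix s) := by
  obtain ⟨m, hm⟩ := h
  rcases head_split' hrefl hsymm hm with ⟨w', rfl⟩ | ⟨m', rfl, hind⟩
  · left
    refine ⟨w', rfl, ?_⟩
    rw [mul_assoc'] at hm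
    exact ⟨m, mul_left_cancel' hrefl hsymm hm⟩
  · right
    refine ⟨hind, ⟨m', ?_⟩⟩
    have hcomm : w * mk D [x] = mk D [x] * w := comm_single hsymm hind
    rw [← mul_assoc', hcomm, mul_assoc'] at hm
    exact mul_left_cancel' hrefl hsymm hm

theorem singleton_eq {x c : A} (h : mk D [x] = mk D [c]) : x = c := by
  have : x ∈ (mk D [c]).alph := by rw [← h]; exact List.mem_singleton.mpr rfl
  simpa [mem_alph_mk] using this

theorem lemma_E (hrefl : ∀ a, D a a) (hsymm : ∀ {a b}, D a b → D b a)
    {c : A} : ∀ {u s : Trace D}, u.Prefix (s * mk D [c]) →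
    u.Prefix s ∨ ∃ u₁, u = u₁ * mk D [c] ∧ u₁.Prefix s := by
  suffices H : ∀ n (u s : Trace D), u.length ≤ n → u.Prefix (s * mk D [c]) →
      u.Prefix s ∨ ∃ u₁, u = u₁ * mk D [c] ∧ u₁.Prefix s by
    intro u s h
    exact H u.length u s le_rfl h
  intro n
  induction n with
  | zero =>
    intro u s hu h
    left
    rw [eq_one_of_length (Nat.le_zero.mp hu)]
    exact ⟨s, one_mul' s⟩
  | succ n ih =>
    intro u s hu h
    by_cases hone : u = 1
    · left; rw [hone]; exact ⟨s, one_mul' s⟩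
    obtain ⟨x, u₁, rfl⟩ := exists_head hone
    have hlen : u₁.length ≤ n := by
      have h1 : (mk D [x] * u₁).length = 1 + u₁.length := by
        rw [length_mul, length_mk, List.length_singleton]
      omega
    obtain ⟨m, hm⟩ := h
    rw [mul_assoc'] at hm
    rcases head_split' hrefl hsymm hm.symm with ⟨s₁, rfl⟩ | ⟨m', hm', hind⟩
    · rw [mul_assoc' (mk D [x]) s₁ (mk D [c])] at hm
      have h2 : u₁ * m = s₁ * mk D [c] := mul_left_cancel' hrefl hsymm hm
      rcases ih u₁ s₁ hlen ⟨m, h2⟩ with h3 | ⟨u₂, hu₂, h3⟩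
      · left; exact prefix_mul_left _ h3
      · right
        refine ⟨mk D [x] * u₂, ?_, prefix_mul_left _ h3⟩
        rw [hu₂, ← mul_assoc']
    · -- singleton [c] = [x] * m'
      have hcx : c = x := by
        have hlm : (mk D [c]).length = (mk D [x] * m').length := by rw [hm']
        simp only [length_mul, length_mk, List.length_singleton] at hlm
        have hm'1 : m' = 1 := eq_one_of_length (by omega)
        rw [hm'1, mul_one'] at hm'
        exact singleton_eq hm'
      subst hcx
      -- hind : letters of s indep of c ; hm : mk [c] * (u₁ * m) = s * mk [c]
      have hcomm : s * mk D [c] = mk D [c] * s := comm_single hsymm hind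
      rw [hcomm] at hm
      have h2 : u₁ * m = s := mul_left_cancel' hrefl hsymm hm
      have hpre : u₁.Prefix s := ⟨m, h2⟩
      right
      refine ⟨u₁, ?_, hpre⟩
      have hu₁c : ∀ d ∈ u₁.alph, ¬ D d c := fun d hd =>
        hind d (alph_prefix hpre hd)
      rw [comm_single hsymm hu₁c]
  
theorem last_eq_of_dep (hrefl : ∀ a, D a a) (hsymm : ∀ {a b}, D a b → D b a)
    {s q : Trace D} {f b : A}
    (h : s * mk D [f] = q * mk D [b]) (hD : D f b) : f = b := by
  obtain ⟨ls, rfl⟩ := exists_rep s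
  obtain ⟨lq, rfl⟩ := exists_rep q
  have h2 := proj_eq_of_mk hrefl hsymm
    (h : mk D (ls ++ [f]) = mk D (lq ++ [b])) hD
  rw [proj_append, proj_append, proj_cons, proj_cons,
    if_pos (Or.inl rfl), if_pos (Or.inr rfl),
    show proj f b ([] : List A) = [] from rfl] at h2
  have h3 := congrArg List.getLast? h2
  rw [List.getLast?_concat, List.getLast?_concat] at h3
  injection h3

theorem lemma_M (hrefl : ∀ a, D a a) (hsymm : ∀ {a b}, D a b → D b a)
    {p q : Trace D} {c e : A}
    (h : p * mk D [c] = q * mk D [e]) (hnD : ¬ D c e) :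
    ∃ r, p = r * mk D [e] ∧ q = r * mk D [c] := by
  have hlen : p.length = q.length := by
    have h0 := congrArg length h
    simp only [length_mul, length_mk, List.length_singleton] at h0
    omega
  have hce : c ≠ e := by rintro rfl; exact hnD (hrefl c)
  have hp : p.Prefix (q * mk D [e]) := ⟨mk D [c], h⟩
  rcases lemma_E hrefl hsymm hp with h1 | ⟨p₁, hp₁, hp₁q⟩
  · have : p = q := prefix_antisymm_of_length h1 (by omega)
    subst this
    have := mul_left_cancel' hrefl hsymm h
    exact absurd (singleton_eq this) hce
  · have hec : mk D [e] * mk D [c] = mk D [c] * mk D [e] :=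
      sound (TraceRel.swap [] [] e c (fun hD => hnD (hsymm hD)))
    have h2 : (p₁ * mk D [c]) * mk D [e] = q * mk D [e] := by
      rw [mul_assoc', ← hec, ← mul_assoc', ← hp₁]
      exact h
    exact ⟨p₁, hp₁, (mul_right_cancel' hrefl hsymm h2).symm⟩

theorem lemma_Edual (hrefl : ∀ a, D a a) (hsymm : ∀ {a b}, D a b → D b a)
    {f : A} : ∀ {v u s : Trace D}, u * v = s * mk D [f] →
    (∃ v', v = v' * mk D [f]) ∨
      (∃ u', u = u' * mk D [f] ∧ ∀ c ∈ v.alph, ¬ D c f) := by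
  suffices H : ∀ n (v u s : Trace D), v.length ≤ n → u * v = s * mk D [f] →
      (∃ v', v = v' * mk D [f]) ∨
      (∃ u', u = u' * mk D [f] ∧ ∀ c ∈ v.alph, ¬ D c f) by
    intro v u s h
    exact H v.length v u s le_rfl h
  intro n
  induction n with
  | zero =>
    intro v u s hv h
    obtain rfl := eq_one_of_length (Nat.le_zero.mp hv)
    rw [mul_one'] at h
    right
    refine ⟨s, h, ?_⟩
    intro c hc
    rw [alph_one] at hc
    exact absurd hc (Set.notMem_empty c)
  | succ n ih =>
    intro v u s hv h
    by_cases hone : v = 1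
    · subst hone
      rw [mul_one'] at h
      right
      refine ⟨s, h, ?_⟩
      intro c hc
      rw [alph_one] at hc
      exact absurd hc (Set.notMem_empty c)
    obtain ⟨v₁, e, rfl⟩ := exists_last hone
    have hlen : v₁.length ≤ n := by
      have h1 : (v₁ * mk D [e]).length = v₁.length + 1 := by
        rw [length_mul, length_mk, List.length_singleton]
      omega
    rw [← mul_assoc'] at h
    by_cases hDef : D e f
    · obtain rfl := last_eq_of_dep hrefl hsymm h hDef
      exact Or.inl ⟨v₁, rfl⟩
    · obtain ⟨r, hr1, hr2⟩ := lemma_M hrefl hsymm h hDef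
      rcases ih v₁ u r hlen hr1 with ⟨v₂, rfl⟩ | ⟨u', hu', hind⟩
      · left
        refine ⟨v₂ * mk D [e], ?_⟩
        have hfe : mk D [f] * mk D [e] = mk D [e] * mk D [f] :=
          sound (TraceRel.swap [] [] f e (fun hD => hDef (hsymm hD)))
        rw [mul_assoc', mul_assoc', hfe, ← mul_assoc']
      · right
        refine ⟨u', hu', ?_⟩
        intro c hc
        rw [alph_mul] at hc
        rcases hc with hc | hc
        · exact hind c hc
        · have : c = e := by simpa [mem_alph_mk] using hc
          subst this
          exact hDef

end Trace
end MazTrace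
namespace MazTrace
namespace Trace

attribute [local instance] Classical.propDecidable

variable {A : Type*} {D : A → A → Prop}

theorem join (hrefl : ∀ a, D a a) (hsymm : ∀ {a b}, D a b → D b a) :
    ∀ {u w t : Trace D}, u.Prefix t → w.Prefix t →
    ∃ y, u.Prefix y ∧ w.Prefix y ∧
      ∀ s, u.Prefix s → w.Prefix s → s.Prefix t → y.Prefix s := by
  suffices H : ∀ n (u w t : Trace D), u.length ≤ n → u.Prefix t → w.Prefix t →
      ∃ y, u.Prefix y ∧ w.Prefix y ∧
        ∀ s, u.Prefix s → w.Prefix s → s.Prefix t → y.Prefix s by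
    intro u w t hu hw
    exact H u.length u w t le_rfl hu hw
  intro n
  induction n with
  | zero =>
    intro u w t hu h1 h2
    obtain rfl := eq_one_of_length (Nat.le_zero.mp hu)
    exact ⟨w, ⟨w, one_mul' w⟩, prefix_refl w, fun s _ hw _ => hw⟩
  | succ n ih =>
    intro u w t hu h1 h2
    by_cases hone : u = 1
    · subst hone
      exact ⟨w, ⟨w, one_mul' w⟩, prefix_refl w, fun s _ hw _ => hw⟩
    obtain ⟨x, u₁, rfl⟩ := exists_head hone
    have hlen : u₁.length ≤ n := by
      have hl1 : (mk D [x] * u₁).length = 1 + u₁.length := by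
        rw [length_mul, length_mk, List.length_singleton]
      omega
    obtain ⟨m, hm⟩ := h1
    rw [mul_assoc'] at hm
    -- t = mk[x] * (u₁ * m)
    have hu₁t : u₁.Prefix (u₁ * m) := prefix_mul_right _ _
    have hw' : w.Prefix (mk D [x] * (u₁ * m)) := by rw [hm]; exact h2
    rcases prefix_head hrefl hsymm hw' with ⟨w₁, rfl, hw₁⟩ | ⟨hind, hwpre⟩
    · -- w = mk[x] * w₁
      obtain ⟨y', hy'u, hy'w, hy'min⟩ := ih u₁ w₁ (u₁ * m) hlen hu₁t hw₁
      refine ⟨mk D [x] * y', prefix_mul_left _ hy'u, prefix_mul_left _ hy'w, ?_⟩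
      intro s hus hws hst
      obtain ⟨k, hk⟩ := hus
      rw [mul_assoc'] at hk
      -- s = mk[x] * (u₁ * k)
      have hu₁s : u₁.Prefix (u₁ * k) := prefix_mul_right _ _
      have hw₁s : w₁.Prefix (u₁ * k) := by
        apply prefix_cancel_left hrefl hsymm (u := mk D [x])
        rw [hk]
        exact hws
      have hs_t : (u₁ * k).Prefix (u₁ * m) := by
        apply prefix_cancel_left hrefl hsymm (u := mk D [x])
        rw [hk, hm]
        exact hst
      have := hy'min (u₁ * k) hu₁s hw₁s hs_t
      rw [← hk]
      exact prefix_mul_left _ this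
    · -- w independent of x, w ⊑ u₁ * m
      obtain ⟨y', hy'u, hy'w, hy'min⟩ := ih u₁ w (u₁ * m) hlen hu₁t hwpre
      refine ⟨mk D [x] * y', prefix_mul_left _ hy'u, ?_, ?_⟩
      · obtain ⟨k, hk⟩ := hy'w
        refine ⟨mk D [x] * k, ?_⟩
        rw [← mul_assoc', comm_single hsymm hind, mul_assoc', hk]
      · intro s hus hws hst
        obtain ⟨k, hk⟩ := hus
        rw [mul_assoc'] at hk
        have hu₁s : u₁.Prefix (u₁ * k) := prefix_mul_right _ _
        have hwxs : w.Prefix (mk D [x] * (u₁ * k)) := by rw [hk]; exact hws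
        have hw₁s : w.Prefix (u₁ * k) := by
          rcases prefix_head hrefl hsymm hwxs with ⟨w₂, rfl, _⟩ | ⟨_, h⟩
          · exfalso
            refine hind x ?_ (hrefl x)
            rw [alph_mul]
            exact Set.mem_union_left _ (by simp [mem_alph_mk])
          · exact h
        have hs_t : (u₁ * k).Prefix (u₁ * m) := by
          apply prefix_cancel_left hrefl hsymm (u := mk D [x])
          rw [hk, hm]
          exact hst
        have := hy'min (u₁ * k) hu₁s hw₁s hs_t
        rw [← hk]
        exact prefix_mul_left _ this

theorem indepSet_one {B : Set A} : (1 : Trace D).IndepSet B := by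
  intro c hc
  rw [alph_one] at hc
  exact absurd hc (Set.notMem_empty c)

theorem isView_nonempty (t : Trace D) (a : A) : ∃ w, IsView {a} t w := by
  have hex : ∃ n, ∃ w z : Trace D, w * z = t ∧ z.IndepSet {a} ∧ w.length = n :=
    ⟨t.length, t, 1, mul_one' t, indepSet_one, rfl⟩
  obtain ⟨w, z, hwz, hzI, hlen⟩ := Nat.find_spec hex
  refine ⟨w, ⟨z, hwz, hzI⟩, ?_⟩
  intro w' v' hw' hv'
  rw [hlen]
  exact Nat.find_le ⟨w', v', hw', hv', rfl⟩

theorem isView_lastIs (hrefl : ∀ a, D a a) (hsymm : ∀ {a b}, D a b → D b a)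
    {t w : Trace D} {a : A} {t₁ : Trace D}
    (ht : t = t₁ * mk D [a]) (hw : IsView {a} t w) : LastIs a w := by
  obtain ⟨⟨z, hz, hzI⟩, hmin⟩ := hw
  have hzI' := indepSet_singleton.mp hzI
  have hanz : a ∉ z.alph := fun h => hzI' a h (hrefl a)
  have haw : a ∈ w.alph := by
    have hat : a ∈ t.alph := by
      rw [ht, alph_mul]
      exact Set.mem_union_right _ (by simp [mem_alph_mk])
    rw [← hz, alph_mul] at hat
    rcases hat with h | h
    · exact h
    · exact absurd h hanz
  have hne : w ≠ 1 := by
    rintro rfl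
    rw [alph_one] at haw
    exact Set.notMem_empty a haw
  apply lastIs_of_all hne
  intro s e hse
  by_cases hDea : D e a
  · -- projection endings argument
    obtain ⟨ls, rfl⟩ := exists_rep s
    obtain ⟨lz, rfl⟩ := exists_rep z
    obtain ⟨lt₁, rfl⟩ := exists_rep t₁
    have heq : mk D ((ls ++ [e]) ++ lz) = mk D (lt₁ ++ [a]) := by
      rw [mk_append (ls ++ [e]) lz, mk_append ls [e], ← hse, hz, ht, mk_append]
    have h2 := proj_eq_of_mk hrefl hsymm heq hDea
    have hprojz : proj e a lz = [] := by
      rw [proj]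
      apply List.filter_eq_nil_iff.mpr
      intro c hc
      simp only [decide_eq_true_eq]
      rintro (rfl | rfl)
      · exact absurd hDea (hzI' c hc)
      · exact absurd (hrefl c) (hzI' c hc)
    rw [proj_append, proj_append, proj_append, hprojz, List.append_nil,
      proj_cons, if_pos (Or.inl rfl), proj_cons, if_pos (Or.inr rfl),
      show proj e a ([] : List A) = [] from rfl] at h2
    have h3 := congrArg List.getLast? h2
    rw [List.getLast?_concat, List.getLast?_concat] at h3
    injection h3
  · exfalso
    have hw' : s * (mk D [e] * z) = t := by rw [← mul_assoc', ← hse, hz]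
    have hIe : (mk D [e] * z).IndepSet {a} := by
      rw [indepSet_singleton]
      intro c hc
      rw [alph_mul] at hc
      rcases hc with hc | hc
      · have : c = e := by simpa [mem_alph_mk] using hc
        subst this
        exact hDea
      · exact hzI' c hc
    have := hmin s (mk D [e] * z) hw' hIe
    have hlw : w.length = s.length + 1 := by
      rw [hse, length_mul, length_mk, List.length_singleton]
    omega

theorem occ (hrefl : ∀ a, D a a) (hsymm : ∀ {a b}, D a b → D b a)
    {v : Trace D} {a : A} (ha : a ∈ v.alph) :
    ∃ v₁, v₁.Prefix v ∧ LastIs a v₁ := by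
  obtain ⟨l, rfl⟩ := exists_rep v
  obtain ⟨l₁, l₂, rfl⟩ := List.append_of_mem (mem_alph_mk.mp ha)
  have hdec : mk D (l₁ ++ [a]) * mk D l₂ = mk D (l₁ ++ a :: l₂) := by
    rw [← mk_append, List.append_assoc]
    rfl
  obtain ⟨w, hw⟩ := isView_nonempty (mk D (l₁ ++ [a])) a
  have hlast : LastIs a w :=
    isView_lastIs hrefl hsymm (t₁ := mk D l₁) (mk_append l₁ [a]) hw
  obtain ⟨⟨z, hz, _⟩, _⟩ := hw
  exact ⟨w, prefix_trans ⟨z, hz⟩ ⟨mk D l₂, hdec⟩, hlast⟩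

theorem split_word (hsymm : ∀ {a b}, D a b → D b a) (p : A → Prop) :
    ∀ (l : List A),
    (∀ x ∈ l, ∀ y ∈ l, p x → ¬ p y → ¬ D x y) →
    mk D l = mk D (l.filter (fun x => decide (p x))) *
      mk D (l.filter (fun x => decide (¬ p x))) := by
  intro l
  induction l with
  | nil => intro _; rfl
  | cons x l ih =>
    intro h
    have ih' := ih (fun c hc y hy => h c (List.mem_cons_of_mem x hc) y (List.mem_cons_of_mem x hy))
    by_cases hx : p x
    · rw [List.filter_cons_of_pos (by simpa using hx),
        List.filter_cons_of_neg (by simpa using hx)]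
      calc mk D (x :: l) = mk D [x] * mk D l := rfl
        _ = mk D [x] * (mk D (l.filter (fun x => decide (p x))) *
            mk D (l.filter (fun x => decide (¬ p x)))) := by rw [← ih']
        _ = (mk D [x] * mk D (l.filter (fun x => decide (p x)))) *
            mk D (l.filter (fun x => decide (¬ p x))) := (mul_assoc' _ _ _).symm
        _ = mk D (x :: l.filter (fun x => decide (p x))) *
            mk D (l.filter (fun x => decide (¬ p x))) := rfl
    · rw [List.filter_cons_of_neg (by simpa using hx),
        List.filter_cons_of_pos (by simpa using hx)]
      have hcomm : mk D (l.filter (fun x => decide (p x))) * mk D [x] =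
          mk D [x] * mk D (l.filter (fun x => decide (p x))) := by
        apply comm_single hsymm
        intro c hc
        have hc' := List.mem_filter.mp (mem_alph_mk.mp hc)
        exact h c (List.mem_cons_of_mem x hc'.1) x (List.mem_cons_self (a := x) (l := l))
          (by simpa using hc'.2) hx
      calc mk D (x :: l) = mk D [x] * mk D l := rfl
        _ = mk D [x] * (mk D (l.filter (fun x => decide (p x))) *
            mk D (l.filter (fun x => decide (¬ p x)))) := by rw [← ih']
        _ = (mk D [x] * mk D (l.filter (fun x => decide (p x)))) *
            mk D (l.filter (fun x => decide (¬ p x))) := (mul_assoc' _ _ _).symm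
        _ = (mk D (l.filter (fun x => decide (p x))) * mk D [x]) *
            mk D (l.filter (fun x => decide (¬ p x))) := by rw [hcomm]
        _ = mk D (l.filter (fun x => decide (p x))) *
            (mk D [x] * mk D (l.filter (fun x => decide (¬ p x)))) := mul_assoc' _ _ _
        _ = mk D (l.filter (fun x => decide (p x))) *
            mk D (x :: l.filter (fun x => decide (¬ p x))) := rfl

theorem conn (hrefl : ∀ a, D a a) (hsymm : ∀ {a b}, D a b → D b a)
    {b : A} {v : Trace D} (hb : LastIs b v) :
    ∀ c ∈ v.alph,
      Relation.ReflTransGen (fun x y => D x y ∧ x ∈ v.alph ∧ y ∈ v.alph) c b := by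
  intro c hc
  set R := fun x y => D x y ∧ x ∈ v.alph ∧ y ∈ v.alph with hR
  set p := fun x => Relation.ReflTransGen R x b with hp
  by_contra hnotp
  obtain ⟨l, hl⟩ := exists_rep v
  have hcond : ∀ x ∈ l, ∀ y ∈ l, p x → ¬ p y → ¬ D x y := by
    intro x hx y hy hpx hpy hD
    apply hpy
    refine Relation.ReflTransGen.head ⟨hsymm hD, ?_, ?_⟩ hpx
    · rw [← hl]; exact hy
    · rw [← hl]; exact hx
  have hsplit := split_word hsymm p l hcond
  have hbv : b ∈ v.alph := by
    obtain ⟨s, hs⟩ := lastIs_decomp hb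
    rw [hs, alph_mul]
    exact Set.mem_union_right _ (by simp [mem_alph_mk])
  have hI : ∀ d ∈ (mk D (l.filter (fun x => decide (¬ p x)))).alph, ¬ D d b := by
    intro d hd
    have hd' := List.mem_filter.mp (mem_alph_mk.mp hd)
    intro hD
    refine (by simpa using hd'.2 : ¬ p d) ?_
    exact Relation.ReflTransGen.single ⟨hD, by rw [← hl]; exact hd'.1, hbv⟩
  have hone : mk D (l.filter (fun x => decide (¬ p x))) = 1 :=
    lastIs_root hrefl hb (by rw [← hsplit, hl]) hI
  have hnil : l.filter (fun x => decide (¬ p x)) = [] := by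
    have := congrArg length hone
    rw [length_mk] at this
    exact List.length_eq_zero_iff.mp this
  have hcl : c ∈ l := by rw [← hl] at hc; exact mem_alph_mk.mp hc
  by_cases hpc : p c
  · exact hnotp hpc
  · have : c ∈ l.filter (fun x => decide (¬ p x)) :=
      List.mem_filter.mpr ⟨hcl, by simpa using hpc⟩
    rw [hnil] at this
    exact absurd this (List.not_mem_nil (a := c))

end Trace
end MazTrace
namespace MazTrace
namespace ZAut

variable {A P : Type*} (M : ZAut A P)

theorem dep_refl (a : A) : M.Dep a a := by
  obtain ⟨p, hp⟩ := M.covers a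
  exact ⟨p, hp, hp⟩

theorem dep_symm {a b : A} (h : M.Dep a b) : M.Dep b a := by
  obtain ⟨p, h1, h2⟩ := h
  exact ⟨p, h2, h1⟩

theorem foldl_none (lw : List A) :
    List.foldl (fun oq a => oq.bind (fun q => M.step q a)) none lw = none := by
  induction lw with
  | nil => rfl
  | cons a lw ih => exact ih

theorem isPlay_prefix {s t : Trace M.Dep} (h : M.IsPlay t) (hp : s.Prefix t) :
    M.IsPlay s := by
  obtain ⟨w, hw⟩ := hp
  intro l hl
  obtain ⟨lw, hlw⟩ := Trace.exists_rep w
  have hmk : Trace.mk M.Dep (l ++ lw) = t := by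
    rw [Trace.mk_append, hl, hlw, hw]
  have h2 := h _ hmk
  rw [ZAut.runWord, List.foldl_append] at h2
  by_contra h3
  have h4 : M.runWord l = none := by
    cases hq : M.runWord l with
    | none => rfl
    | some q => exact absurd (by rw [hq]; rfl) h3
  rw [show List.foldl (fun oq a => oq.bind (fun q => M.step q a))
      (some fun p => M.init p) l = M.runWord l from rfl, h4, foldl_none] at h2
  simp at h2

theorem walk {S : Set A} {f : P → Prop} {b : A}
    (hb : ¬ ∃ p ∈ M.dom b, f p) :
    ∀ {c}, Relation.ReflTransGen (fun x y => M.Dep x y ∧ x ∈ S ∧ y ∈ S) c b →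
    (∃ p ∈ M.dom c, f p) →
    ∃ a ∈ S, (∃ p ∈ M.dom a, f p) ∧ (∃ p ∈ M.dom a, ¬ f p) := by
  intro c hchain
  induction hchain using Relation.ReflTransGen.head_induction_on with
  | refl => exact fun hc => absurd hc hb
  | @head c' c₁ hrel hrest ih =>
    intro hc
    by_cases h1 : ∃ p ∈ M.dom c₁, f p
    · exact ih h1
    · obtain ⟨hD, hcS, hc₁S⟩ := hrel
      obtain ⟨p, hp1, hp2⟩ := hD
      exact ⟨c', hcS, hc, ⟨p, hp1, fun hf => h1 ⟨p, hp2, hf⟩⟩⟩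

theorem mixed {v : Trace M.Dep} {b : A} (hb : Trace.LastIs b v) {Q : Set P}
    (h1 : ∃ b' ∈ v.alph, (M.dom b' ∩ Q).Nonempty)
    (h2 : ∃ b'' ∈ v.alph, (M.dom b'' ∩ Qᶜ).Nonempty) :
    ∃ a ∈ v.alph, (M.dom a ∩ Q).Nonempty ∧ (M.dom a ∩ Qᶜ).Nonempty := by
  have hrefl : ∀ a, M.Dep a a := M.dep_refl
  have hsymm : ∀ {a b : A}, M.Dep a b → M.Dep b a := fun h => M.dep_symm h
  have hbv : b ∈ v.alph := by
    obtain ⟨s, hs⟩ := Trace.lastIs_decomp hb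
    rw [hs, Trace.alph_mul]
    exact Set.mem_union_right _ (by simp [Trace.mem_alph_mk])
  by_cases hQ : (M.dom b ∩ Q).Nonempty
  · by_cases hQc : (M.dom b ∩ Qᶜ).Nonempty
    · exact ⟨b, hbv, hQ, hQc⟩
    · -- dom b ⊆ Q ; walk from b'' with f p := p ∉ Q
      obtain ⟨b'', hb''v, p0, hp0d, hp0⟩ := h2
      have hnb : ¬ ∃ p ∈ M.dom b, (p ∉ Q) := by
        rintro ⟨p, hpd, hpq⟩
        exact hQc ⟨p, hpd, hpq⟩
      obtain ⟨a, haS, ⟨p1, hp1d, hp1⟩, ⟨p2, hp2d, hp2⟩⟩ :=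
        M.walk hnb (Trace.conn hrefl hsymm hb b'' hb''v) ⟨p0, hp0d, hp0⟩
      exact ⟨a, haS, ⟨p2, hp2d, not_not.mp hp2⟩, ⟨p1, hp1d, hp1⟩⟩
  · -- dom b ∩ Q = ∅ ; walk from b' with f p := p ∈ Q
    obtain ⟨b', hb'v, p0, hp0d, hp0⟩ := h1
    have hnb : ¬ ∃ p ∈ M.dom b, (p ∈ Q) := by
      rintro ⟨p, hpd, hpq⟩
      exact hQ ⟨p, hpd, hpq⟩
    obtain ⟨a, haS, ⟨p1, hp1d, hp1⟩, ⟨p2, hp2d, hp2⟩⟩ :=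
      M.walk hnb (Trace.conn hrefl hsymm hb b' hb'v) ⟨p0, hp0d, hp0⟩
    exact ⟨a, haS, ⟨p1, hp1d, hp1⟩, ⟨p2, hp2d, hp2⟩⟩

end ZAut
end MazTrace
open MazTrace in
/-- A prime play `u` is a `Q`-broadcast iff for every trace `v` such that `uv`
is a play and `v` is prime: `uv` is prime, or `v I Q`, or `dom(v) ⊆ Q`. -/
theorem broadcast_characterization {A P : Type*} [Finite A] [Finite P] (M : ZAut A P)
    (u : Trace M.Dep) (hprime : u.IsPrime) (hplay : M.IsPlay u) (Q : Set P) :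
    M.Broadcast Q u ↔
      ∀ v : Trace M.Dep, M.IsPlay (u * v) → v.IsPrime →
        ((u * v).IsPrime ∨ M.IndepProcs v Q ∨ M.tdom v ⊆ Q) := by
  classical
  have hrefl : ∀ a : A, M.Dep a a := M.dep_refl
  have hsymm : ∀ {a b : A}, M.Dep a b → M.Dep b a := fun h => M.dep_symm h
  constructor
  · -- Broadcast → characterization
    rintro ⟨_, _, hbc3⟩
    intro v hplayuv hvprime
    by_contra hcon
    push_neg at hcon
    obtain ⟨hnpr, hnI, hnD⟩ := hcon
    obtain ⟨b, hb⟩ := hvprime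
    have hbl : Trace.LastIs b v := hb
    have h1 : ∃ b' ∈ v.alph, (M.dom b' ∩ Q).Nonempty := by
      by_contra h
      push_neg at h
      exact hnI (fun c hc => h c hc)
    have h2 : ∃ b'' ∈ v.alph, (M.dom b'' ∩ Qᶜ).Nonempty := by
      obtain ⟨p, hp1, hp2⟩ := Set.not_subset.mp hnD
      obtain ⟨a0, ha0, hpd⟩ := hp1
      exact ⟨a0, ha0, ⟨p, hpd, hp2⟩⟩
    obtain ⟨a, ha_alph, haQ, haQc⟩ := M.mixed hbl h1 h2
    obtain ⟨v₁, hv₁pre, hlastv₁⟩ := Trace.occ hrefl hsymm ha_alph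
    have hpre1 : (u * v₁).Prefix (u * v) := Trace.prefix_mul_left u hv₁pre
    have hplay1 : M.IsPlay (u * v₁) := M.isPlay_prefix hplayuv hpre1
    obtain ⟨v₁', hv₁'⟩ := Trace.lastIs_decomp hlastv₁
    have hmax : M.MaxAct (u * v₁) a :=
      ⟨u * v₁', by rw [hv₁', ← Trace.mul_assoc']⟩
    have hupre := hbc3 v₁ a hplay1 hmax haQ haQc
    obtain ⟨w0, hw0⟩ := Trace.isView_nonempty (u * v₁) a
    have hview : Trace.IsView {a} (u * v₁) (Trace.view {a} (u * v₁)) :=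
      Classical.epsilon_spec ⟨w0, hw0⟩
    have hlastω : Trace.LastIs a (Trace.view {a} (u * v₁)) :=
      Trace.isView_lastIs hrefl hsymm
        (show u * v₁ = (u * v₁') * Trace.mk M.Dep [a] by
          rw [hv₁', ← Trace.mul_assoc']) hview
    obtain ⟨⟨ζ, hζ, hζI⟩, -⟩ := hview
    apply hnpr
    have hvne : v ≠ 1 := Trace.lastIs_ne_one hbl
    obtain ⟨v₄, hv₄⟩ := Trace.lastIs_decomp hbl
    have huvne : u * v ≠ 1 := by
      intro h0
      have hlen0 := congrArg Trace.length h0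
      rw [hv₄, ← Trace.mul_assoc'] at hlen0
      simp only [Trace.length_mul, Trace.length_mk, List.length_singleton] at hlen0
      rw [show (1 : Trace M.Dep).length = 0 from rfl] at hlen0
      omega
    refine ⟨b, Trace.lastIs_of_all huvne ?_⟩
    intro s f hsf
    by_cases hDfb : M.Dep f b
    · exact Trace.last_eq_of_dep hrefl hsymm
        (show s * Trace.mk M.Dep [f] = (u * v₄) * Trace.mk M.Dep [b] by
          rw [← hsf, hv₄, Trace.mul_assoc']) hDfb
    · exfalso
      rcases Trace.lemma_Edual hrefl hsymm hsf with ⟨v', hv'⟩ | ⟨u', hu', hvIf⟩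
      · have hfb : f = b := Trace.lastIs_ends hbl hv'.symm
        exact hDfb (by rw [hfb]; exact hrefl b)
      · have hv₁If : ∀ c ∈ v₁.alph, ¬ M.Dep c f :=
          fun c hc => hvIf c (Trace.alph_prefix hv₁pre hc)
        have ht'' : u * v₁ = (u' * v₁) * Trace.mk M.Dep [f] :=
          calc u * v₁ = (u' * Trace.mk M.Dep [f]) * v₁ := by rw [← hu']
            _ = u' * (Trace.mk M.Dep [f] * v₁) := Trace.mul_assoc' _ _ _
            _ = u' * (v₁ * Trace.mk M.Dep [f]) := by
                rw [Trace.comm_single hsymm hv₁If]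
            _ = (u' * v₁) * Trace.mk M.Dep [f] := (Trace.mul_assoc' _ _ _).symm
        have hζeq : (Trace.view {a} (u * v₁)) * ζ = (u' * v₁) * Trace.mk M.Dep [f] := by
          rw [hζ]
          exact ht''
        rcases Trace.lemma_Edual hrefl hsymm hζeq with ⟨ζ', hζ'⟩ | ⟨ω₁, hω₁, -⟩
        · have h7 : ((Trace.view {a} (u * v₁)) * ζ') * Trace.mk M.Dep [f]
              = (u' * v₁) * Trace.mk M.Dep [f] := by
            rw [Trace.mul_assoc', ← hζ']
            exact hζeq
          have h8 := Trace.mul_right_cancel' hrefl hsymm h7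
          have h9 : u.Prefix (u' * v₁) := Trace.prefix_trans hupre ⟨ζ', h8⟩
          have h10 : (u' * Trace.mk M.Dep [f]).Prefix (u' * v₁) := by
            rw [← hu']; exact h9
          have h11 := Trace.prefix_cancel_left hrefl hsymm h10
          have h12 : f ∈ v₁.alph :=
            Trace.alph_prefix h11 (by simp [Trace.mem_alph_mk])
          exact hv₁If f h12 (hrefl f)
        · have hfa : f = a := Trace.lastIs_ends hlastω hω₁.symm
          subst hfa
          exact hvIf f ha_alph (hrefl f)
  · -- characterization → Broadcast
    intro hRHS
    refine ⟨hprime, hplay, ?_⟩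
    intro v a hplayuv hmax haQ haQc
    obtain ⟨t₁, ht₁⟩ := hmax
    obtain ⟨w0, hw0⟩ := Trace.isView_nonempty (u * v) a
    have hview : Trace.IsView {a} (u * v) (Trace.view {a} (u * v)) :=
      Classical.epsilon_spec ⟨w0, hw0⟩
    have hlastw : Trace.LastIs a (Trace.view {a} (u * v)) :=
      Trace.isView_lastIs hrefl hsymm ht₁ hview
    set w := Trace.view {a} (u * v) with hwdef
    obtain ⟨⟨z, hz, hzI⟩, -⟩ := hview
    have hzI' := Trace.indepSet_singleton.mp hzI
    by_cases hwu : w.Prefix u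
    · obtain ⟨r, hr⟩ := hwu
      have hrv : r * v = z := by
        apply Trace.mul_left_cancel' hrefl hsymm (s := w)
        rw [← Trace.mul_assoc', hr, hz]
      have hrI : ∀ c ∈ r.alph, ¬ M.Dep c a := by
        intro c hc
        apply hzI'
        rw [← hrv, Trace.alph_mul]
        exact Set.mem_union_left _ hc
      by_cases hr1 : r = 1
      · rw [hr1, Trace.mul_one'] at hr
        rw [← hr]
        exact Trace.prefix_refl w
      · exfalso
        obtain ⟨r₁, e, hre⟩ := Trace.exists_last hr1
        obtain ⟨c0, hc0⟩ := hprime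
        have hc0l : Trace.LastIs c0 u := hc0
        have he : e = c0 := Trace.lastIs_ends hc0l
          (show (w * r₁) * Trace.mk M.Dep [e] = u by
            rw [Trace.mul_assoc', ← hre, hr])
        obtain ⟨w₂, hw₂⟩ := Trace.lastIs_decomp hlastw
        have hu2 : (w₂ * r) * Trace.mk M.Dep [a] = u :=
          calc (w₂ * r) * Trace.mk M.Dep [a]
              = w₂ * (r * Trace.mk M.Dep [a]) := Trace.mul_assoc' _ _ _
            _ = w₂ * (Trace.mk M.Dep [a] * r) := by
                rw [Trace.comm_single hsymm hrI]
            _ = (w₂ * Trace.mk M.Dep [a]) * r := (Trace.mul_assoc' _ _ _).symm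
            _ = w * r := by rw [← hw₂]
            _ = u := hr
        have ha0 : a = c0 := Trace.lastIs_ends hc0l hu2
        have heR : e ∈ r.alph := by
          rw [hre, Trace.alph_mul]
          exact Set.mem_union_right _ (by simp [Trace.mem_alph_mk])
        exact hrI e heR (by rw [show e = a from he.trans ha0.symm]; exact hrefl a)
    · obtain ⟨y, hy_u, hy_w, hy_min⟩ :=
        Trace.join hrefl hsymm (⟨v, rfl⟩ : u.Prefix (u * v)) ⟨z, hz⟩
      have hy_t : y.Prefix (u * v) :=
        hy_min (u * v) ⟨v, rfl⟩ ⟨z, hz⟩ (Trace.prefix_refl _)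
      obtain ⟨v₂, hv₂⟩ := hy_u
      have hv₂ne : v₂ ≠ 1 := by
        rintro rfl
        rw [Trace.mul_one'] at hv₂
        exact hwu (hv₂ ▸ hy_w)
      have hends : ∀ s e, v₂ = s * Trace.mk M.Dep [e] → e = a := by
        intro s e hse
        have hy_se : y = (u * s) * Trace.mk M.Dep [e] := by
          rw [← hv₂, hse, ← Trace.mul_assoc']
        have hnw : ¬ w.Prefix (u * s) := by
          intro hws
          have hmin2 := hy_min (u * s) (Trace.prefix_mul_right u s) hws
            (Trace.prefix_trans ⟨Trace.mk M.Dep [e], hy_se.symm⟩ hy_t)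
          have hlen2 := Trace.prefix_length_le hmin2
          have hly : y.length = (u * s).length + 1 := by
            rw [hy_se]
            simp only [Trace.length_mul, Trace.length_mk, List.length_singleton]
          omega
        rcases Trace.lemma_E hrefl hsymm
            (show w.Prefix ((u * s) * Trace.mk M.Dep [e]) by
              rw [← hy_se]; exact hy_w) with h | ⟨w₁, hw₁, -⟩
        · exact absurd h hnw
        · exact Trace.lastIs_ends hlastw hw₁.symm
      have hlastv₂ : Trace.LastIs a v₂ := Trace.lastIs_of_all hv₂ne hends
      obtain ⟨v₃, hv₃⟩ := Trace.lastIs_decomp hlastv₂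
      have hplay_y : M.IsPlay (u * v₂) := by
        rw [hv₂]
        exact M.isPlay_prefix hplayuv hy_t
      have hav₂ : a ∈ v₂.alph := by
        rw [hv₃, Trace.alph_mul]
        exact Set.mem_union_right _ (by simp [Trace.mem_alph_mk])
      rcases hRHS v₂ hplay_y ⟨a, hlastv₂⟩ with hypr | hIQ | hdomQ
      · obtain ⟨b', hb'⟩ := hypr
        have hb'l : Trace.LastIs b' (u * v₂) := hb'
        have hab' : a = b' := Trace.lastIs_ends hb'l
          (show (u * v₃) * Trace.mk M.Dep [a] = u * v₂ by
            rw [Trace.mul_assoc', ← hv₃])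
        have hlasty : Trace.LastIs a (u * v₂) := by rw [hab']; exact hb'l
        obtain ⟨e', he'⟩ := hy_w
        obtain ⟨m, hm⟩ := hy_t
        have h6 : e' * m = z := by
          apply Trace.mul_left_cancel' hrefl hsymm (s := w)
          rw [← Trace.mul_assoc', he', hm, ← hz]
        have he'I : ∀ c ∈ e'.alph, ¬ M.Dep c a := by
          intro c hc
          apply hzI'
          rw [← h6, Trace.alph_mul]
          exact Set.mem_union_left _ hc
        have hlasty2 : Trace.LastIs a y := by rw [← hv₂]; exact hlasty
        have he'1 : e' = 1 := Trace.lastIs_root hrefl hlasty2 he' he'I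
        rw [he'1, Trace.mul_one'] at he'
        exact ⟨v₂, by rw [hv₂, ← he']⟩
      · exfalso
        rw [hIQ a hav₂] at haQ
        exact Set.not_nonempty_empty haQ
      · exfalso
        obtain ⟨p, hpd, hpQc⟩ := haQc
        exact hpQc (hdomQ ⟨a, hav₂, hpd⟩)
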